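/- For the softmax map p_i(s) = exp(s_i)/Σ_j exp(s_j) on R^C, the Jacobian J(s) = diag(p) - p p^T is symmetric positive semidefinite, and its spectral norm satisfies ‖J(s)‖₂ ≤ 1/2 for all s ∈ R^C. -/

import Mathlib

open Matrix Real Finset

/-- Softmax probability vector. -/
noncomputable def softmaxVec {C : ℕ} (s : Fin C → ℝ) : Fin C → ℝ :=
  fun i => Real.exp (s i) / ∑ j, Real.exp (s j)

/-- Softmax Jacobian `diag p - p pᵀ`. -/
noncomputable def softmaxJac {C : ℕ} (s : Fin C → ℝ) : Matrix (Fin C) (Fin C) ℝ :=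
  Matrix.diagonal (softmaxVec s) - Matrix.vecMulVec (softmaxVec s) (softmaxVec s)

lemma softmaxVec_pos {C : ℕ} (hC : 1 ≤ C) (s : Fin C → ℝ) (i : Fin C) :
    0 < softmaxVec s i := by
  have : Nonempty (Fin C) := ⟨⟨0, hC⟩⟩
  exact div_pos (Real.exp_pos _) (Finset.sum_pos (fun j _ => Real.exp_pos _) univ_nonempty)

lemma softmaxVec_sum {C : ℕ} (hC : 1 ≤ C) (s : Fin C → ℝ) :
    ∑ i, softmaxVec s i = 1 := by
  have : Nonempty (Fin C) := ⟨⟨0, hC⟩⟩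
  have h : (0:ℝ) < ∑ j, Real.exp (s j) :=
    Finset.sum_pos (fun j _ => Real.exp_pos _) univ_nonempty
  simp only [softmaxVec]
  rw [← Finset.sum_div, div_self h.ne']

lemma softmaxJac_quadForm {C : ℕ} (s : Fin C → ℝ) (x : Fin C → ℝ) :
    x ⬝ᵥ (softmaxJac s).mulVec x =
      (∑ i, softmaxVec s i * x i ^ 2) - (∑ i, softmaxVec s i * x i) ^ 2 := by
  set p := softmaxVec s with hp
  have hmv : (softmaxJac s).mulVec x = fun i => p i * x i - p i * (∑ j, p j * x j) := by
    funext i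
    rw [softmaxJac, Matrix.sub_mulVec]
    have h1 : (Matrix.diagonal p *ᵥ x) i = p i * x i := Matrix.mulVec_diagonal _ _ _
    have h2 : (Matrix.vecMulVec p p *ᵥ x) i = p i * ∑ j, p j * x j := by
      simp only [Matrix.mulVec, dotProduct, Matrix.vecMulVec_apply]
      rw [Finset.mul_sum]
      exact Finset.sum_congr rfl fun j _ => by ring
    rw [Pi.sub_apply, ← hp, h1, h2]
  rw [hmv]
  simp only [dotProduct, mul_sub]
  rw [Finset.sum_sub_distrib]
  congr 1
  · exact Finset.sum_congr rfl fun i _ => by ring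
  · have h3 : ∀ i : Fin C, x i * (p i * (∑ j, p j * x j)) = (p i * x i) * (∑ j, p j * x j) :=
      fun i => by ring
    simp_rw [h3]
    rw [← Finset.sum_mul, sq]

lemma key_ineq (t u r S P : ℝ) (_ht0 : 0 ≤ t) (ht : t ≤ 1/2) (hS : 0 ≤ S)
    (hP : P ≤ t*S) (hr : r^2 ≤ t*P) :
    (1-t)*u^2 + P - ((1-t)*u + r)^2 ≤ (u^2 + S)/2 := by
  nlinarith [sq_nonneg ((1-2*t+2*t^2)*u + 2*(1-t)*r),
    mul_nonneg (by linarith : (0:ℝ) ≤ 1-2*t) (by linarith : 0 ≤ t*P - r^2),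
    mul_nonneg (by linarith : (0:ℝ) ≤ 1-t) (by linarith : 0 ≤ t*S - P),
    mul_nonneg (sq_nonneg (1-2*t)) hS]

/-- The softmax Jacobian is symmetric, positive semidefinite, and its Rayleigh
quotients over unit vectors are bounded by `1/2` (spectral norm `≤ 1/2`). -/
theorem softmax_jacobian_psd_and_spectral_norm_le_half
    {C : ℕ} (hC : 1 ≤ C) (s : Fin C → ℝ) :
    (softmaxJac s).IsSymm ∧ (softmaxJac s).PosSemidef ∧
      ∀ x : Fin C → ℝ, ∑ i, (x i) ^ 2 = 1 →
        x ⬝ᵥ (softmaxJac s).mulVec x ≤ 1 / 2 := by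
  set p := softmaxVec s with hp
  have hpos := softmaxVec_pos hC s
  have hsum := softmaxVec_sum hC s
  have hsymm : (softmaxJac s).IsSymm := by
    ext i j
    simp only [softmaxJac, Matrix.transpose_apply, Matrix.sub_apply, Matrix.diagonal_apply,
      Matrix.vecMulVec_apply]
    rcases eq_or_ne i j with h | h
    · simp [h, mul_comm]
    · simp [h, Ne.symm h, mul_comm]
  have hnonneg : ∀ x : Fin C → ℝ, 0 ≤ x ⬝ᵥ (softmaxJac s).mulVec x := by
    intro x
    rw [softmaxJac_quadForm]
    have hcs := sum_mul_sq_le_sq_mul_sq Finset.univ (fun i => Real.sqrt (p i))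
      (fun i => Real.sqrt (p i) * x i)
    have e1 : ∀ i : Fin C, Real.sqrt (p i) * (Real.sqrt (p i) * x i) = p i * x i := by
      intro i
      rw [← mul_assoc, Real.mul_self_sqrt (hpos i).le]
    have e2 : ∀ i : Fin C, Real.sqrt (p i) ^ 2 = p i := fun i => Real.sq_sqrt (hpos i).le
    have e3 : ∀ i : Fin C, (Real.sqrt (p i) * x i) ^ 2 = p i * x i ^ 2 := by
      intro i; rw [mul_pow, e2]
    rw [← hp] at hsum ⊢
    simp only [e1, e2, e3, hsum, one_mul] at hcs
    linarith
  refine ⟨hsymm, Matrix.posSemidef_iff_dotProduct_mulVec.mpr ⟨?_, ?_⟩, ?_⟩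
  · rw [Matrix.IsHermitian]
    ext i j
    have := congrFun (congrFun hsymm i) j
    simpa using this
  · intro x
    simpa using hnonneg x
  · intro x hx
    rw [softmaxJac_quadForm]
    by_cases hcase : ∀ i, p i ≤ 1/2
    · have h1 : ∑ i, p i * x i ^ 2 ≤ ∑ i, (1/2) * x i ^ 2 :=
        Finset.sum_le_sum fun i _ => mul_le_mul_of_nonneg_right (hcase i) (sq_nonneg _)
      have h2 : ∑ i, (1/2:ℝ) * x i ^ 2 = 1/2 := by
        rw [← Finset.mul_sum, hx]; ring
      nlinarith [sq_nonneg (∑ i, p i * x i)]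
    · push_neg at hcase
      obtain ⟨k, hk⟩ := hcase
      set t : ℝ := ∑ i ∈ univ.erase k, p i with htdef
      set r : ℝ := ∑ i ∈ univ.erase k, p i * x i with hrdef
      set S : ℝ := ∑ i ∈ univ.erase k, x i ^ 2 with hSdef
      set P : ℝ := ∑ i ∈ univ.erase k, p i * x i ^ 2 with hPdef
      have hpk : p k + t = 1 := by
        rw [htdef, ← hsum, ← Finset.add_sum_erase _ _ (Finset.mem_univ k)]
      have hxk : x k ^ 2 + S = 1 := by
        rw [hSdef, ← hx, ← Finset.add_sum_erase _ _ (Finset.mem_univ k)]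
      have ht0 : 0 ≤ t := Finset.sum_nonneg fun i _ => (hpos i).le
      have ht : t ≤ 1/2 := by linarith
      have hS : 0 ≤ S := Finset.sum_nonneg fun i _ => sq_nonneg _
      have hple : ∀ i ∈ univ.erase k, p i ≤ t :=
        fun i hi => Finset.single_le_sum (f := p) (fun j _ => (hpos j).le) hi
      have hP : P ≤ t * S := by
        rw [hPdef, hSdef, Finset.mul_sum]
        exact Finset.sum_le_sum fun i hi =>
          mul_le_mul_of_nonneg_right (hple i hi) (sq_nonneg _)
      have hr : r ^ 2 ≤ t * P := by
        have hcs := sum_mul_sq_le_sq_mul_sq (univ.erase k) (fun i => Real.sqrt (p i))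
          (fun i => Real.sqrt (p i) * x i)
        have e1 : ∀ i : Fin C, Real.sqrt (p i) * (Real.sqrt (p i) * x i) = p i * x i := by
          intro i; rw [← mul_assoc, Real.mul_self_sqrt (hpos i).le]
        have e2 : ∀ i : Fin C, Real.sqrt (p i) ^ 2 = p i := fun i => Real.sq_sqrt (hpos i).le
        have e3 : ∀ i : Fin C, (Real.sqrt (p i) * x i) ^ 2 = p i * x i ^ 2 := by
          intro i; rw [mul_pow, e2]
        simp only [e1, e2, e3] at hcs
        exact hcs
      have hsplit1 : ∑ i, p i * x i ^ 2 = p k * x k ^ 2 + P := by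
        rw [hPdef, ← Finset.add_sum_erase _ _ (Finset.mem_univ k)]
      have hsplit2 : ∑ i, p i * x i = p k * x k + r := by
        rw [hrdef, ← Finset.add_sum_erase _ _ (Finset.mem_univ k)]
      have hkey := key_ineq t (x k) r S P ht0 ht hS hP hr
      have hpkt : p k = 1 - t := by linarith
      rw [hsplit1, hsplit2, hpkt]
      linarith [hkey, hxk]
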